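/- arXiv:2603.17849 — 2 statements merged into one kernel-verified Lean document; each statement's English description precedes it below -/
import Mathlib

section
/- Let K_J, K_R ∈ ℝ^{N×N}, K_u ∈ ℝ^{N×m}, and let P ∈ ℝ^{N×N} be symmetric positive definite with P K_J + K_Jᵀ P = 0 and P K_R + K_Rᵀ P positive semidefinite. If Ψ : ℝ → ℝᴺ is differentiable with Ψ'(t) = (K_J − K_R) Ψ(t) + K_u u(t), then the generalized storage function t ↦ ½ Ψ(t)ᵀ P Ψ(t) is differentiable with derivative at most ⟨K_uᵀ P Ψ(t), u(t)⟩ for all t. -/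
open Matrix

/-- **Passivity with a generalized quadratic storage function.**
If `P ≻ 0` satisfies the co-design conditions `P K_J + K_Jᵀ P = 0` and
`P K_R + K_Rᵀ P ⪰ 0`, then along trajectories of `Ψ' = (K_J − K_R)Ψ + K_u u` the storage
`t ↦ ½ Ψᵀ P Ψ` is differentiable with derivative at most `⟨K_uᵀ P Ψ, u⟩`. -/
theorem lifted_KpH_generalized_storage_passive {N m : ℕ}
    (KJ KR : Matrix (Fin N) (Fin N) ℝ)
    (Ku : Matrix (Fin N) (Fin m) ℝ)
    (P : Matrix (Fin N) (Fin N) ℝ)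
    (hPsym : P.IsSymm) (hPpd : P.PosDef)
    (hPJ : P * KJ + KJᵀ * P = 0)
    (hPR : (P * KR + KRᵀ * P).PosSemidef)
    (Ψ : ℝ → Fin N → ℝ) (u : ℝ → Fin m → ℝ)
    (hΨ : ∀ t, HasDerivAt Ψ ((KJ - KR).mulVec (Ψ t) + Ku.mulVec (u t)) t) :
    ∀ t, ∃ d : ℝ, HasDerivAt (fun s => (1 / 2 : ℝ) * (Ψ s ⬝ᵥ P.mulVec (Ψ s))) d t ∧
      d ≤ (Kuᵀ * P).mulVec (Ψ t) ⬝ᵥ u t := by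
  intro t
  set v : Fin N → ℝ := (KJ - KR).mulVec (Ψ t) + Ku.mulVec (u t) with hv
  have hcomp : ∀ i, HasDerivAt (fun s => Ψ s i) (v i) t :=
    hasDerivAt_pi.1 (hΨ t)
  -- derivative of quadratic form
  have hD : HasDerivAt (fun s => (1 / 2 : ℝ) * (Ψ s ⬝ᵥ P.mulVec (Ψ s)))
      ((1 / 2 : ℝ) * (v ⬝ᵥ P.mulVec (Ψ t) + Ψ t ⬝ᵥ P.mulVec v)) t := by
    have h1 : HasDerivAt (fun s => Ψ s ⬝ᵥ P.mulVec (Ψ s))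
        (v ⬝ᵥ P.mulVec (Ψ t) + Ψ t ⬝ᵥ P.mulVec v) t := by
      have : ∀ i ∈ Finset.univ, HasDerivAt (fun s => Ψ s i * ∑ j, P i j * Ψ s j)
          (v i * (∑ j, P i j * Ψ t j) + Ψ t i * ∑ j, P i j * v j) t := by
        intro i _
        have hsum : HasDerivAt (fun s => ∑ j, P i j * Ψ s j) (∑ j, P i j * v j) t :=
          HasDerivAt.fun_sum fun j _ => (hcomp j).const_mul (P i j)
        exact (hcomp i).mul hsum
      have := HasDerivAt.fun_sum this
      simp only [Finset.sum_add_distrib] at this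
      refine (this.congr_deriv ?_).congr_of_eventuallyEq (Filter.Eventually.of_forall fun s => ?_) <;>
        simp [dotProduct, mulVec, Finset.mul_sum, Finset.sum_mul, mul_comm, mul_assoc,
          mul_left_comm]
    exact h1.const_mul _
  refine ⟨_, hD, ?_⟩
  -- symmetry: v ⬝ᵥ PΨ = Ψ ⬝ᵥ Pv
  have hsym : v ⬝ᵥ P.mulVec (Ψ t) = Ψ t ⬝ᵥ P.mulVec v := by
    rw [dotProduct_mulVec, ← mulVec_transpose, hPsym.eq, dotProduct_comm]
  have hd : (1 / 2 : ℝ) * (v ⬝ᵥ P.mulVec (Ψ t) + Ψ t ⬝ᵥ P.mulVec v)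
      = Ψ t ⬝ᵥ P.mulVec v := by rw [hsym]; ring
  rw [hd, hv]
  have haux : ∀ A : Matrix (Fin N) (Fin N) ℝ, Ψ t ⬝ᵥ A.mulVec (Ψ t) = Ψ t ⬝ᵥ Aᵀ.mulVec (Ψ t) := by
    intro A
    rw [dotProduct_mulVec, ← mulVec_transpose, dotProduct_comm]
  -- expand
  have hexp : Ψ t ⬝ᵥ P.mulVec ((KJ - KR).mulVec (Ψ t) + Ku.mulVec (u t))
      = Ψ t ⬝ᵥ (P * KJ).mulVec (Ψ t) - Ψ t ⬝ᵥ (P * KR).mulVec (Ψ t)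
        + Ψ t ⬝ᵥ (P * Ku).mulVec (u t) := by
    simp [mulVec_add, mulVec_sub, dotProduct_add, Matrix.mul_sub, sub_mulVec, mulVec_mulVec,
      dotProduct_sub]
  rw [hexp]
  have hJ : Ψ t ⬝ᵥ (P * KJ).mulVec (Ψ t) = 0 := by
    have h2 : Ψ t ⬝ᵥ (P * KJ + KJᵀ * P).mulVec (Ψ t) = 0 := by rw [hPJ]; simp
    have h3 : Ψ t ⬝ᵥ (KJᵀ * P).mulVec (Ψ t) = Ψ t ⬝ᵥ (P * KJ).mulVec (Ψ t) := by
      rw [haux (KJᵀ * P), transpose_mul, transpose_transpose, hPsym.eq]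
    rw [add_mulVec, dotProduct_add, h3] at h2
    linarith
  have hR : 0 ≤ Ψ t ⬝ᵥ (P * KR).mulVec (Ψ t) := by
    have h2 := hPR.dotProduct_mulVec_nonneg (Ψ t)
    have h3 : Ψ t ⬝ᵥ (KRᵀ * P).mulVec (Ψ t) = Ψ t ⬝ᵥ (P * KR).mulVec (Ψ t) := by
      rw [haux (KRᵀ * P), transpose_mul, transpose_transpose, hPsym.eq]
    simp only [star_trivial, add_mulVec, dotProduct_add, h3] at h2
    linarith [h2]
  have hKu : Ψ t ⬝ᵥ (P * Ku).mulVec (u t) = (Kuᵀ * P).mulVec (Ψ t) ⬝ᵥ u t := by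
    rw [dotProduct_mulVec, ← mulVec_transpose, transpose_mul, hPsym.eq]
  rw [hKu]
  linarith
end

section
/- Let K_J, K_R ∈ ℝ^{N×N} with K_J + K_Jᵀ = 0 and K_R symmetric positive semidefinite, K_u ∈ ℝ^{N×m}, and K_d ∈ ℝ^{m×m} symmetric positive definite. Define the closed-loop matrix A_cl = K_J − K_R − K_u K_d K_uᵀ. Assume the detectability condition: for every λ ∈ ℂ with Re λ ≥ 0 and every nonzero v ∈ ℂᴺ with A_cl v = λ v (identifying A_cl with its complexification), one has K_uᵀ v ≠ 0. Then every eigenvalue λ ∈ ℂ of A_cl satisfies Re λ < 0. -/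
open Matrix

private lemma quad_re' {n : ℕ} (M : Matrix (Fin n) (Fin n) ℝ) (w : Fin n → ℂ) :
    (star w ⬝ᵥ (M.map (Complex.ofReal ·)) *ᵥ w).re =
      (fun i => (w i).re) ⬝ᵥ M *ᵥ (fun i => (w i).re)
      + (fun i => (w i).im) ⬝ᵥ M *ᵥ (fun i => (w i).im) := by
  simp only [dotProduct, mulVec, map_apply, Pi.star_apply, Complex.star_def, Finset.mul_sum,
    Complex.re_sum, Complex.mul_re, Complex.mul_im, Complex.conj_re, Complex.conj_im,
    Complex.ofReal_re, Complex.ofReal_im, ← Finset.sum_add_distrib]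
  congr 1; funext i; congr 1; funext j; ring

private lemma skew_quad_zero {n : ℕ} (KJ : Matrix (Fin n) (Fin n) ℝ)
    (hKJ : KJ + KJᵀ = 0) (x : Fin n → ℝ) : x ⬝ᵥ KJ *ᵥ x = 0 := by
  have h1 : x ⬝ᵥ KJ *ᵥ x = x ⬝ᵥ KJᵀ *ᵥ x := by
    simp only [dotProduct, mulVec, transpose_apply, Finset.mul_sum]
    rw [Finset.sum_comm]
    congr 1; funext i; congr 1; funext j; ring
  have h2 : KJᵀ = -KJ := by
    have := eq_neg_of_add_eq_zero_right hKJ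
    rw [← this]
  rw [h2] at h1
  simp only [neg_mulVec, dotProduct_neg] at h1
  linarith

private lemma conj_factor {n m : ℕ} (Ku : Matrix (Fin n) (Fin m) ℝ)
    (Kd : Matrix (Fin m) (Fin m) ℝ) (v : Fin n → ℂ) :
    star v ⬝ᵥ ((Ku * Kd * Kuᵀ).map (Complex.ofReal ·)) *ᵥ v =
      star ((Kuᵀ.map (Complex.ofReal ·)) *ᵥ v) ⬝ᵥ
        (Kd.map (Complex.ofReal ·)) *ᵥ ((Kuᵀ.map (Complex.ofReal ·)) *ᵥ v) := by
  have hmap : (Ku * Kd * Kuᵀ).map (Complex.ofReal ·) =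
      Ku.map (Complex.ofReal ·) * Kd.map (Complex.ofReal ·) * Kuᵀ.map (Complex.ofReal ·) := by
    ext i j
    simp [Matrix.mul_apply, Finset.mul_sum, Finset.sum_mul]
  rw [hmap, ← mulVec_mulVec, ← mulVec_mulVec, dotProduct_mulVec]
  congr 1
  funext j
  simp [vecMul, mulVec, dotProduct, map_sum, mul_comm]

/-- **Hurwitz property of the closed-loop generator under detectability.**
With `K_J` skew-symmetric, `K_R ⪰ 0`, `K_d ≻ 0`, and
`A_cl = K_J − K_R − K_u K_d K_uᵀ`, if no eigenvector of (the complexification of) `A_cl`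
with eigenvalue in the closed right half-plane lies in the kernel of `K_uᵀ`
(detectability), then every eigenvalue of `A_cl` has negative real part. -/
theorem damping_injection_closed_loop_hurwitz {N m : ℕ}
    (KJ KR : Matrix (Fin N) (Fin N) ℝ)
    (hKJ : KJ + KJᵀ = 0)
    (hKR : KR.IsSymm) (hKRpsd : KR.PosSemidef)
    (Ku : Matrix (Fin N) (Fin m) ℝ)
    (Kd : Matrix (Fin m) (Fin m) ℝ)
    (hKd : Kd.IsSymm) (hKdpd : Kd.PosDef)
    (Acl : Matrix (Fin N) (Fin N) ℝ)
    (hAcl : Acl = KJ - KR - Ku * Kd * Kuᵀ)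
    (hdet : ∀ (l : ℂ) (v : Fin N → ℂ), 0 ≤ l.re → v ≠ 0 →
      (Acl.map (Complex.ofReal ·)).mulVec v = l • v →
      (Kuᵀ.map (Complex.ofReal ·)).mulVec v ≠ 0) :
    ∀ (l : ℂ) (v : Fin N → ℂ), v ≠ 0 →
      (Acl.map (Complex.ofReal ·)).mulVec v = l • v → l.re < 0 := by
  intro l v hv heig
  by_contra hcon
  push_neg at hcon
  -- detectability gives a nonzero output
  have hw : (Kuᵀ.map (Complex.ofReal ·)).mulVec v ≠ 0 := hdet l v hcon hv heig
  set w : Fin m → ℂ := (Kuᵀ.map (Complex.ofReal ·)).mulVec v with hwdef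
  -- decompose the complexified closed-loop matrix
  have hmapAcl : Acl.map (Complex.ofReal ·) =
      KJ.map (Complex.ofReal ·) - KR.map (Complex.ofReal ·)
        - (Ku * Kd * Kuᵀ).map (Complex.ofReal ·) := by
    ext i j
    simp [hAcl, map_apply]
  -- the quadratic form identity
  have hquad : star v ⬝ᵥ (Acl.map (Complex.ofReal ·)) *ᵥ v = l * (star v ⬝ᵥ v) := by
    rw [heig, dotProduct_smul, smul_eq_mul]
  have hsplit : star v ⬝ᵥ (Acl.map (Complex.ofReal ·)) *ᵥ v =
      star v ⬝ᵥ (KJ.map (Complex.ofReal ·)) *ᵥ v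
      - star v ⬝ᵥ (KR.map (Complex.ofReal ·)) *ᵥ v
      - star w ⬝ᵥ (Kd.map (Complex.ofReal ·)) *ᵥ w := by
    rw [hmapAcl, sub_mulVec, sub_mulVec, dotProduct_sub, dotProduct_sub,
      conj_factor Ku Kd v]
  -- real parts
  have hKJre : (star v ⬝ᵥ (KJ.map (Complex.ofReal ·)) *ᵥ v).re = 0 := by
    rw [quad_re', skew_quad_zero KJ hKJ, skew_quad_zero KJ hKJ, add_zero]
  have hKRre : 0 ≤ (star v ⬝ᵥ (KR.map (Complex.ofReal ·)) *ᵥ v).re := by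
    rw [quad_re']
    have h1 := hKRpsd.dotProduct_mulVec_nonneg (fun i => (v i).re)
    have h2 := hKRpsd.dotProduct_mulVec_nonneg (fun i => (v i).im)
    simp only [star_trivial] at h1 h2
    linarith
  have hKdre : 0 < (star w ⬝ᵥ (Kd.map (Complex.ofReal ·)) *ᵥ w).re := by
    rw [quad_re']
    set a : Fin m → ℝ := fun i => (w i).re
    set b : Fin m → ℝ := fun i => (w i).im
    have hab : a ≠ 0 ∨ b ≠ 0 := by
      by_contra hab
      push_neg at hab
      apply hw
      funext i
      have ha := congrFun hab.1 i
      have hb := congrFun hab.2 i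
      simp only [a, b, Pi.zero_apply] at ha hb
      exact Complex.ext ha hb
    rcases hab with ha | hb
    · have h1 := hKdpd.dotProduct_mulVec_pos ha
      have h2 := hKdpd.posSemidef.dotProduct_mulVec_nonneg b
      simp only [star_trivial] at h1 h2
      linarith
    · have h1 := hKdpd.posSemidef.dotProduct_mulVec_nonneg a
      have h2 := hKdpd.dotProduct_mulVec_pos hb
      simp only [star_trivial] at h1 h2
      linarith
  -- norm of v
  have hnv : 0 < (star v ⬝ᵥ v).re ∧ (star v ⬝ᵥ v).im = 0 := by
    constructor
    · have : star v ⬝ᵥ v = (∑ i, Complex.normSq (v i) : ℝ) := by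
        push_cast
        simp only [dotProduct, Pi.star_apply, Complex.star_def]
        exact Finset.sum_congr rfl fun i _ => by
          rw [mul_comm]; exact Complex.mul_conj (v i)
      rw [this]
      simp only [Complex.ofReal_re]
      have hex : ∃ i, v i ≠ 0 := by
        by_contra h
        push_neg at h
        exact hv (funext h)
      obtain ⟨i, hi⟩ := hex
      have : 0 < Complex.normSq (v i) := Complex.normSq_pos.mpr hi
      have hnonneg : ∀ j ∈ Finset.univ, (0:ℝ) ≤ Complex.normSq (v j) :=
        fun j _ => Complex.normSq_nonneg _
      calc (0:ℝ) < Complex.normSq (v i) := this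
        _ ≤ ∑ j, Complex.normSq (v j) :=
          Finset.single_le_sum hnonneg (Finset.mem_univ i)
    · simp only [dotProduct, Complex.im_sum, Complex.mul_im, Pi.star_apply,
        Complex.star_def, Complex.conj_re, Complex.conj_im]
      exact Finset.sum_eq_zero fun i _ => by ring
  -- combine
  have hre : l.re * (star v ⬝ᵥ v).re = (star v ⬝ᵥ (Acl.map (Complex.ofReal ·)) *ᵥ v).re := by
    rw [hquad, Complex.mul_re, hnv.2, mul_zero, sub_zero]
  rw [hsplit] at hre
  simp only [Complex.sub_re, hKJre, zero_sub] at hre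
  have hlt : l.re * (star v ⬝ᵥ v).re < 0 := by
    rw [hre]; linarith
  have hge : 0 ≤ l.re * (star v ⬝ᵥ v).re :=
    mul_nonneg hcon (le_of_lt hnv.1)
  linarith
end
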